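/- For every continuous function f : ℝ → ℝ, the set L_f^∞ = {x ∈ ℝ : Lip f(x) = ∞} is a G_δ set. -/
import Mathlib


open Set Filter MeasureTheory Topology
open scoped ENNReal NNReal

/-- `M_f(x,r) = sup { |f(x)-f(y)|/r : |x-y| ≤ r }`, valued in `[0,∞]`. -/
noncomputable def Mf (f : ℝ → ℝ) (x r : ℝ) : ℝ≥0∞ :=
  ⨆ y ∈ {y : ℝ | |x - y| ≤ r}, ENNReal.ofReal (|f x - f y| / r)

/-- The big Lip function: `Lip f(x) = limsup_{r→0⁺} M_f(x,r)`. -/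
noncomputable def bigLip (f : ℝ → ℝ) (x : ℝ) : ℝ≥0∞ :=
  Filter.limsup (fun r => Mf f x r) (𝓝[>] (0 : ℝ))

/-- The little lip function: `lip f(x) = liminf_{r→0⁺} M_f(x,r)`. -/
noncomputable def litLip (f : ℝ → ℝ) (x : ℝ) : ℝ≥0∞ :=
  Filter.liminf (fun r => Mf f x r) (𝓝[>] (0 : ℝ))

/-- A set `E ⊆ ℝ` is trim if `λ(E ∩ (a,b)) < b - a` for every open interval `(a,b)`. -/
def Trim (E : Set ℝ) : Prop :=
  ∀ a b : ℝ, a < b → volume (E ∩ Ioo a b) < ENNReal.ofReal (b - a)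

/-- For every continuous `f : ℝ → ℝ`, the set `L_f^∞ = {x : Lip f(x) = ∞}` is `G_δ`. -/
theorem isGdelta_Lip_infinite_set (f : ℝ → ℝ) (hf : Continuous f) :
    IsGδ {x : ℝ | bigLip f x = ⊤} := by
  have basis := nhdsGT_basis (0 : ℝ)
  -- open pieces
  set U : ℕ → ℕ → Set ℝ := fun n k =>
    {x | ∃ r : ℝ, 0 < r ∧ r < 1 / (k + 1) ∧ ∃ y : ℝ, |x - y| < r ∧ (n : ℝ) * r < |f x - f y|}
    with hU
  have hUopen : ∀ n k, IsOpen (U n k) := by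
    intro n k
    have : U n k = ⋃ (r : ℝ) (y : ℝ),
        {x | (0 < r ∧ r < 1 / (k + 1)) ∧ |x - y| < r ∧ (n : ℝ) * r < |f x - f y|} := by
      ext x; simp only [hU, mem_setOf_eq, mem_iUnion]; tauto
    rw [this]
    refine isOpen_iUnion fun r => isOpen_iUnion fun y => ?_
    by_cases h : 0 < r ∧ r < 1 / (k + 1)
    · have : {x : ℝ | (0 < r ∧ r < 1 / (k + 1)) ∧ |x - y| < r ∧ (n : ℝ) * r < |f x - f y|}
          = {x | |x - y| < r} ∩ {x | (n : ℝ) * r < |f x - f y|} := by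
        ext x; simp only [mem_setOf_eq, mem_inter_iff]; tauto
      rw [this]
      exact ((isOpen_lt (by continuity) continuous_const).inter
        (isOpen_lt continuous_const (by continuity)))
    · have : {x : ℝ | (0 < r ∧ r < 1 / (k + 1)) ∧ |x - y| < r ∧ (n : ℝ) * r < |f x - f y|}
          = ∅ := by
        ext x; simp only [mem_setOf_eq, mem_empty_iff_false, iff_false]; tauto
      rw [this]; exact isOpen_empty
  have key : {x : ℝ | bigLip f x = ⊤} = ⋂ (n : ℕ) (k : ℕ), U n k := by
    ext x
    simp only [mem_setOf_eq, mem_iInter]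
    constructor
    · intro htop n k
      -- from limsup = ⊤, frequently n < Mf
      have hlt : (n : ℝ≥0∞) < bigLip f x := htop ▸ ENNReal.natCast_lt_top n
      have hfreq : ∃ᶠ r in 𝓝[>] (0 : ℝ), (n : ℝ≥0∞) < Mf f x r :=
        Filter.frequently_lt_of_lt_limsup (by isBoundedDefault) hlt
      have hk : (0 : ℝ) < 1 / (k + 1) := by positivity
      obtain ⟨r, hr, hnr⟩ := (basis.frequently_iff.mp hfreq) (1 / (k + 1)) hk
      obtain ⟨hr0, hrk⟩ := hr
      refine ⟨r, hr0, hrk, ?_⟩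
      rw [Mf] at hnr
      rw [lt_iSup_iff] at hnr
      obtain ⟨y, hy⟩ := hnr
      rw [lt_iSup_iff] at hy
      obtain ⟨hyr, hval⟩ := hy
      -- hval : n < ofReal (|f x - f y| / r), hyr : |x - y| ≤ r
      have hval' : (n : ℝ) < |f x - f y| / r := by
        rw [← ENNReal.ofReal_natCast n] at hval
        by_contra hcon
        push_neg at hcon
        exact absurd (ENNReal.ofReal_le_ofReal hcon) (not_le.mpr hval)
      have hval2 : (n : ℝ) * r < |f x - f y| := by
        rw [lt_div_iff₀ hr0] at hval'; linarith
      -- translate to strict |x - y| < r using continuity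
      have hyc : y ∈ closure (Metric.ball x r) := by
        rw [closure_ball x (ne_of_gt hr0)]
        rw [Metric.mem_closedBall, dist_comm, Real.dist_eq]
        exact hyr
      have hopen : IsOpen {z : ℝ | (n : ℝ) * r < |f x - f z|} :=
        isOpen_lt continuous_const (by continuity)
      obtain ⟨y', hy'o, hy'b⟩ := mem_closure_iff.mp hyc _ hopen hval2
      refine ⟨y', ?_, hy'o⟩
      rw [Metric.mem_ball, Real.dist_eq, abs_sub_comm] at hy'b
      exact hy'b
    · intro hx
      by_contra htop
      obtain ⟨n, hn⟩ := ENNReal.exists_nat_gt htop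
      have : (n : ℝ≥0∞) ≤ bigLip f x := by
        refine Filter.le_limsup_of_frequently_le ?_ (Filter.isBoundedUnder_of ⟨⊤, fun _ => le_top⟩)
        rw [basis.frequently_iff]
        intro δ hδ
        obtain ⟨k, hk⟩ := exists_nat_gt (1 / δ)
        have hkpos : (0:ℝ) < k + 1 := by positivity
        have hkδ : 1 / ((k:ℝ) + 1) < δ := by
          rw [div_lt_iff₀ hkpos]
          have h1 : 1 / δ < (k : ℝ) + 1 := lt_of_lt_of_le hk (by linarith)
          calc (1:ℝ) = δ * (1/δ) := by field_simp
            _ < δ * ((k:ℝ)+1) := by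
                exact mul_lt_mul_of_pos_left h1 hδ
        obtain ⟨r, hr0, hrk, y, hyr, hval⟩ := hx n k
        refine ⟨r, ⟨hr0, lt_trans hrk hkδ⟩, ?_⟩
        have hle : (n : ℝ≥0∞) ≤ ENNReal.ofReal (|f x - f y| / r) := by
          rw [← ENNReal.ofReal_natCast n]
          apply ENNReal.ofReal_le_ofReal
          rw [le_div_iff₀ hr0]
          exact le_of_lt hval
        refine le_trans hle ?_
        have hmem : y ∈ {y : ℝ | |x - y| ≤ r} := le_of_lt hyr
        exact le_iSup₂ (f := fun y (_ : y ∈ {y : ℝ | |x - y| ≤ r}) =>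
          ENNReal.ofReal (|f x - f y| / r)) y hmem
      exact absurd hn (not_lt.mpr this)
  rw [key]
  exact IsGδ.iInter fun n => IsGδ.iInter fun k => (hUopen n k).isGδ
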